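/- For the discrete BGT instance (3/8−ε, 1/4, 1/4), with 0 < ε < 1/24, the optimal maximum height is 1 (achieved by the periodic schedule (1,2,1,3)), while the Reduce-Max schedule lets bamboo b_1 reach height 9/8 − 3ε. Hence the approximation ratio of Reduce-Max is at least 9/8. -/

import Mathlib

def lastCut {n : ℕ} (S : ℕ → Fin n) (i : Fin n) (t : ℕ) : ℕ :=
  ((Finset.range t).filter (fun s => S s = i)).sup id

noncomputable def bgtHeight {n : ℕ} (h : Fin n → ℝ) (S : ℕ → Fin n) (i : Fin n) (t : ℕ) : ℝ :=
  h i * ((t : ℝ) - (lastCut S i t : ℝ))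

lemma le_lastCut {n : ℕ} (S : ℕ → Fin n) (i : Fin n) {t m : ℕ} (hm : m < t)
    (hSm : S m = i) : m ≤ lastCut S i t := by
  apply Finset.le_sup (f := id)
  simp [Finset.mem_filter, hm, hSm]

lemma lastCut_le {n : ℕ} (S : ℕ → Fin n) (i : Fin n) {t : ℕ} (m : ℕ)
    (hmax : ∀ s, m < s → s < t → S s ≠ i) : lastCut S i t ≤ m := by
  apply Finset.sup_le
  intro s hs
  simp only [Finset.mem_filter, Finset.mem_range] at hs
  simp only [id_eq]
  by_contra hc
  exact hmax s (by omega) hs.1 hs.2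

lemma fin3cases (x : Fin 3) : x = 0 ∨ x = 1 ∨ x = 2 := by fin_cases x <;> simp

lemma lastCut_le_self {n : ℕ} (S : ℕ → Fin n) (i : Fin n) (t : ℕ) :
    lastCut S i t ≤ t := by
  apply Finset.sup_le
  intro s hs
  simp only [Finset.mem_filter, Finset.mem_range] at hs
  simp only [id_eq]
  omega

def Sper : ℕ → Fin 3 := fun t => ![2, 0, 1, 0] ⟨t % 4, Nat.mod_lt _ (by norm_num)⟩

lemma Sper_eq (m : ℕ) : (m % 4 = 1 ∨ m % 4 = 3 → Sper m = 0) ∧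
    (m % 4 = 2 → Sper m = 1) ∧ (m % 4 = 0 → Sper m = 2) := by
  refine ⟨fun h => ?_, fun h => ?_, fun h => ?_⟩ <;> unfold Sper
  · rcases h with h | h <;> simp only [h] <;> rfl
  · simp only [h]; rfl
  · simp only [h]; rfl

/-- For the instance `(3/8-ε, 1/4, 1/4)` with `0 < ε < 1/24`: the periodic schedule
repeating `(b₁,b₂,b₁,b₃)` keeps all heights at most `1` (so `OPT ≤ 1`), while any
Reduce-Max schedule (each day cut a currently highest bamboo, ties broken towards the
lower index) lets bamboo `b₁` reach height `9/8 - 3ε`.  Hence the approximation ratio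
of Reduce-Max is at least `9/8`. -/
theorem reduce_max_nine_eighths (ε : ℝ) (hε0 : 0 < ε) (hε : ε < 1/24) :
    (∀ (i : Fin 3) (t : ℕ),
        bgtHeight ![3/8 - ε, 1/4, 1/4]
          (fun t => ![2, 0, 1, 0] ⟨t % 4, by omega⟩) i t ≤ 1) ∧
    (∀ S : ℕ → Fin 3,
      (∀ t, 1 ≤ t → ∀ j : Fin 3,
          bgtHeight ![3/8 - ε, 1/4, 1/4] S j t ≤
            bgtHeight ![3/8 - ε, 1/4, 1/4] S (S t) t ∧
          (bgtHeight ![3/8 - ε, 1/4, 1/4] S j t =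
            bgtHeight ![3/8 - ε, 1/4, 1/4] S (S t) t → S t ≤ j)) →
      ∃ t : ℕ, (9 : ℝ)/8 - 3 * ε ≤ bgtHeight ![3/8 - ε, 1/4, 1/4] S 0 t) := by
  constructor
  · intro i t
    show bgtHeight ![3/8 - ε, 1/4, 1/4] Sper i t ≤ 1
    fin_cases i
    · -- bamboo 0, cut at odd times
      have hb : t ≤ lastCut Sper 0 t + 2 := by
        rcases le_or_gt t 2 with h | h
        · omega
        · set m := t - 1 - (t % 2) with hm
          have h1 : m < t ∧ t ≤ m + 2 ∧ (m % 4 = 1 ∨ m % 4 = 3) := by omega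
          have hS : Sper m = 0 := (Sper_eq m).1 h1.2.2
          have := le_lastCut Sper 0 h1.1 hS
          omega
      have hc : ((t : ℝ) - (lastCut Sper 0 t : ℝ)) ≤ 2 := by
        have := (Nat.cast_le (α := ℝ)).mpr hb
        push_cast at this
        linarith
      have hc0 : (0 : ℝ) ≤ ((t : ℝ) - (lastCut Sper 0 t : ℝ)) := by
        have := (Nat.cast_le (α := ℝ)).mpr (lastCut_le_self Sper 0 t)
        linarith
      show (3/8 - ε) * ((t : ℝ) - (lastCut Sper 0 t : ℝ)) ≤ 1
      nlinarith
    · -- bamboo 1, cut at times ≡ 2 mod 4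
      have hb : t ≤ lastCut Sper 1 t + 4 := by
        rcases le_or_gt t 4 with h | h
        · omega
        · set m := t - 1 - ((t + 1) % 4) with hm
          have h1 : m < t ∧ t ≤ m + 4 ∧ m % 4 = 2 := by omega
          have hS : Sper m = 1 := (Sper_eq m).2.1 h1.2.2
          have := le_lastCut Sper 1 h1.1 hS
          omega
      have hc : ((t : ℝ) - (lastCut Sper 1 t : ℝ)) ≤ 4 := by
        have := (Nat.cast_le (α := ℝ)).mpr hb
        push_cast at this
        linarith
      have hc0 : (0 : ℝ) ≤ ((t : ℝ) - (lastCut Sper 1 t : ℝ)) := by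
        have := (Nat.cast_le (α := ℝ)).mpr (lastCut_le_self Sper 1 t)
        linarith
      show (1/4 : ℝ) * ((t : ℝ) - (lastCut Sper 1 t : ℝ)) ≤ 1
      nlinarith
    · -- bamboo 2, cut at times ≡ 0 mod 4
      have hb : t ≤ lastCut Sper 2 t + 4 := by
        rcases le_or_gt t 4 with h | h
        · omega
        · set m := t - 1 - ((t + 3) % 4) with hm
          have h1 : m < t ∧ t ≤ m + 4 ∧ m % 4 = 0 := by omega
          have hS : Sper m = 2 := (Sper_eq m).2.2 h1.2.2
          have := le_lastCut Sper 2 h1.1 hS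
          omega
      have hc : ((t : ℝ) - (lastCut Sper 2 t : ℝ)) ≤ 4 := by
        have := (Nat.cast_le (α := ℝ)).mpr hb
        push_cast at this
        linarith
      have hc0 : (0 : ℝ) ≤ ((t : ℝ) - (lastCut Sper 2 t : ℝ)) := by
        have := (Nat.cast_le (α := ℝ)).mpr (lastCut_le_self Sper 2 t)
        linarith
      show (1/4 : ℝ) * ((t : ℝ) - (lastCut Sper 2 t : ℝ)) ≤ 1
      nlinarith
  · intro S hg
    have lc1 : ∀ i : Fin 3, lastCut S i 1 = 0 := fun i =>
      Nat.le_zero.mp (lastCut_le S i 0 (by intro s h1 h2; omega))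
    -- S 1 = 0
    have hS1 : S 1 = 0 := by
      have hg1 := (hg 1 le_rfl 0).1
      rcases fin3cases (S 1) with h | h | h
      · exact h
      · rw [h] at hg1
        simp only [bgtHeight, lc1] at hg1
        norm_num at hg1
        linarith
      · rw [h] at hg1
        simp only [bgtHeight, Matrix.cons_val, lc1] at hg1
        norm_num at hg1
        linarith
    have lc02 : lastCut S 0 2 = 1 :=
      le_antisymm (lastCut_le S 0 1 (by intro s h1 h2; omega))
        (le_lastCut S 0 (by omega) hS1)
    have lc12 : lastCut S 1 2 = 0 :=
      Nat.le_zero.mp (lastCut_le S 1 0 (by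
        intro s h1 h2
        have : s = 1 := by omega
        rw [this, hS1]; decide))
    have lc22 : lastCut S 2 2 = 0 :=
      Nat.le_zero.mp (lastCut_le S 2 0 (by
        intro s h1 h2
        have : s = 1 := by omega
        rw [this, hS1]; decide))
    -- S 2 = 1
    have hS2 : S 2 = 1 := by
      have hg2 := hg 2 (by omega) 1
      rcases fin3cases (S 2) with h | h | h
      · have h1 := hg2.1
        rw [h] at h1
        simp only [bgtHeight, lc02, lc12] at h1
        norm_num at h1
        linarith
      · exact h
      · exfalso
        have heq : bgtHeight ![3/8 - ε, 1/4, 1/4] S 1 2 =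
            bgtHeight ![3/8 - ε, 1/4, 1/4] S (S 2) 2 := by
          rw [h]
          simp only [bgtHeight, Matrix.cons_val, lc12, lc22]
        have h2 := hg2.2 heq
        rw [h] at h2
        exact absurd h2 (by decide)
    have lc03 : lastCut S 0 3 = 1 :=
      le_antisymm (lastCut_le S 0 1 (by
        intro s h1 h2
        have : s = 2 := by omega
        rw [this, hS2]; decide))
        (le_lastCut S 0 (by omega) hS1)
    have lc13 : lastCut S 1 3 = 2 :=
      le_antisymm (lastCut_le S 1 2 (by intro s h1 h2; omega))
        (le_lastCut S 1 (by omega) hS2)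
    have lc23 : lastCut S 2 3 = 0 :=
      Nat.le_zero.mp (lastCut_le S 2 0 (by
        intro s h1 h2
        interval_cases s
        · rw [hS1]; decide
        · rw [hS2]; decide))
    -- S 3 = 2
    have hS3 : S 3 = 2 := by
      have hg3 := (hg 3 (by omega) 2).1
      rcases fin3cases (S 3) with h | h | h
      · rw [h] at hg3
        simp only [bgtHeight, Matrix.cons_val, lc23, lc03] at hg3
        norm_num at hg3
        linarith
      · rw [h] at hg3
        simp only [bgtHeight, Matrix.cons_val, lc23, lc13] at hg3
        norm_num at hg3
      · exact h
    have lc04 : lastCut S 0 4 = 1 :=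
      le_antisymm (lastCut_le S 0 1 (by
        intro s h1 h2
        interval_cases s
        · rw [hS2]; decide
        · rw [hS3]; decide))
        (le_lastCut S 0 (by omega) hS1)
    refine ⟨4, ?_⟩
    simp only [bgtHeight, lc04]
    norm_num
    linarith
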